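/- Let 𝒪 be a factorial ring, let f, g ∈ 𝒪 be relatively prime elements, and let h ∈ 𝒪 be arbitrary. Then the sequence 0 → 𝒪/(f, h) → 𝒪/(f, gh) → 𝒪/(f, g) → 0 is exact, where the first map is induced by multiplication by g (which is well defined since g·(f,h) ⊆ (f, gh)) and the second map is the natural surjection. That is: multiplication by g gives an injective 𝒪-module map 𝒪/(f,h) → 𝒪/(f,gh) whose image is exactly the kernel of the natural projection 𝒪/(f,gh) → 𝒪/(f,g). -/

import Mathlib

open Ideal

/-- Multiplication by `g` induces a well-defined `𝒪`-module map `𝒪/(f,h) → 𝒪/(f,gh)`,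
since `g·(f,h) ⊆ (f,gh)`. -/
noncomputable def mulQMap {O : Type*} [CommRing O] (f g h : O) :
    (O ⧸ Ideal.span {f, h}) →ₗ[O] O ⧸ Ideal.span {f, g * h} :=
  Submodule.mapQ (Ideal.span {f, h}) (Ideal.span {f, g * h}) (LinearMap.lsmul O O g)
    (by
      rw [Ideal.span_le]
      rintro x hx
      simp only [Set.mem_insert_iff, Set.mem_singleton_iff] at hx
      simp only [SetLike.mem_coe, Submodule.mem_comap, LinearMap.lsmul_apply, smul_eq_mul]
      rcases hx with rfl | rfl
      · exact Ideal.mul_mem_left _ g (Ideal.subset_span (Set.mem_insert _ _))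
      · exact Ideal.subset_span (Set.mem_insert_of_mem _ rfl))

/-- The natural surjection `𝒪/(f,gh) → 𝒪/(f,g)`. -/
noncomputable def projQMap {O : Type*} [CommRing O] (f g h : O) :
    (O ⧸ Ideal.span {f, g * h}) → O ⧸ Ideal.span {f, g} :=
  Ideal.Quotient.factor (S := Ideal.span {f, g * h}) (T := Ideal.span {f, g})
    (by
      rw [Ideal.span_le]
      rintro x hx
      simp only [Set.mem_insert_iff, Set.mem_singleton_iff] at hx
      rcases hx with rfl | rfl
      · exact Ideal.subset_span (Set.mem_insert _ _)
      · exact Ideal.mul_mem_right h _ (Ideal.subset_span (Set.mem_insert_of_mem _ rfl)))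

/-- Lemma 1.5, case (i): for `𝒪` factorial, `f, g` relatively prime and `h` arbitrary, the
sequence `0 → 𝒪/(f,h) → 𝒪/(f,gh) → 𝒪/(f,g) → 0` is exact, the first map being
multiplication by `g` and the second the natural surjection. -/
theorem exact_mul_quotient_seq_of_isRelPrime {O : Type*} [CommRing O] [IsDomain O]
    [UniqueFactorizationMonoid O] (f g h : O) (hfg : IsRelPrime f g) :
    Function.Injective (mulQMap f g h) ∧
    Function.Exact (mulQMap f g h) (projQMap f g h) ∧
    Function.Surjective (projQMap f g h) := by
  refine ⟨?_, ?_, ?_⟩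
  · rw [← LinearMap.ker_eq_bot, eq_bot_iff]
    intro x hx
    obtain ⟨x, rfl⟩ := Submodule.Quotient.mk_surjective _ x
    rw [LinearMap.mem_ker, mulQMap, Submodule.mapQ_apply, Submodule.Quotient.mk_eq_zero] at hx
    simp only [LinearMap.lsmul_apply, smul_eq_mul] at hx
    rw [Ideal.mem_span_pair] at hx
    obtain ⟨a, b, hab⟩ := hx
    have hdvd : f ∣ x - b * h := by
      refine hfg.dvd_of_dvd_mul_left ⟨a, ?_⟩
      linear_combination -hab
    obtain ⟨c, hc⟩ := hdvd
    rw [Submodule.mem_bot, Submodule.Quotient.mk_eq_zero, Ideal.mem_span_pair]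
    exact ⟨c, b, by linear_combination -hc⟩
  · intro y
    obtain ⟨x, rfl⟩ := Ideal.Quotient.mk_surjective (I := Ideal.span {f, g * h}) y
    constructor
    · intro hy
      rw [projQMap, Ideal.Quotient.factor_mk, Ideal.Quotient.eq_zero_iff_mem,
        Ideal.mem_span_pair] at hy
      obtain ⟨a, b, hab⟩ := hy
      refine ⟨Submodule.Quotient.mk b, ?_⟩
      rw [mulQMap, Submodule.mapQ_apply]
      simp only [LinearMap.lsmul_apply, smul_eq_mul]
      refine (Submodule.Quotient.eq _).mpr ?_
      rw [Ideal.mem_span_pair]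
      exact ⟨-a, 0, by linear_combination -hab⟩
    · rintro ⟨z, hz⟩
      rw [← hz]
      obtain ⟨z, rfl⟩ := Submodule.Quotient.mk_surjective _ z
      rw [mulQMap, Submodule.mapQ_apply]
      simp only [LinearMap.lsmul_apply, smul_eq_mul]
      show projQMap f g h (Ideal.Quotient.mk _ (g * z)) = 0
      rw [projQMap, Ideal.Quotient.factor_mk, Ideal.Quotient.eq_zero_iff_mem,
        Ideal.mem_span_pair]
      exact ⟨0, z, by ring⟩
  · intro z
    obtain ⟨x, rfl⟩ := Ideal.Quotient.mk_surjective (I := Ideal.span {f, g}) z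
    exact ⟨Ideal.Quotient.mk _ x, Ideal.Quotient.factor_mk _ x⟩
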